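/- Let τ_K > τ_M > 1 with τ_K⁻¹ + τ_M⁻¹ < 1, and define λ± := (√(τ_M⁻¹(1−τ_K⁻¹)) ± √(τ_K⁻¹(1−τ_M⁻¹)))². Then 0 < λ₋ < λ₊ < 1, and the Wachter density ω_{τ_K,τ_M}(x) := (τ_K/(2π))·√((x−λ₋)(λ₊−x))/(x(1−x)) on [λ₋, λ₊] integrates to 1, i.e. it defines a probability measure on [λ₋, λ₊]. -/

import Mathlib

open MeasureTheory ProbabilityTheory Filter Matrix

noncomputable section

/-- Euclidean dot product on `Fin n → ℝ`. -/
def dotR {n : ℕ} (a b : Fin n → ℝ) : ℝ := ∑ i, a i * b i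

/-- The (cross-)covariance matrix `E[X Yᵀ]` of two mean-zero random vectors. -/
def covMat {Ω : Type} [MeasurableSpace Ω] (μ : Measure Ω) {n m : ℕ}
    (X : Ω → Fin n → ℝ) (Y : Ω → Fin m → ℝ) : Matrix (Fin n) (Fin m) ℝ :=
  Matrix.of fun i j => ∫ ω, X ω i * Y ω j ∂μ

/-- A random vector is centered (jointly) Gaussian if every linear functional of it
is a centered one-dimensional Gaussian. -/
def IsCenteredGaussianVec {Ω : Type} [MeasurableSpace Ω] (μ : Measure Ω)
    {n : ℕ} (X : Ω → Fin n → ℝ) : Prop :=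
  ∀ l : Fin n → ℝ, ∃ v : NNReal,
    Measure.map (fun ω => dotR l (X ω)) μ = gaussianReal 0 v

/-- Fourth-moment Gaussian family of random variables: mean zero and the Wick rule
for all fourth joint moments. -/
def FourthMomentGaussian {Ω : Type} [MeasurableSpace Ω] (μ : Measure Ω)
    {ι : Type} (X : ι → Ω → ℝ) : Prop :=
  (∀ i, ∫ ω, X i ω ∂μ = 0) ∧
  ∀ i j k l, ∫ ω, X i ω * X j ω * X k ω * X l ω ∂μ =
    (∫ ω, X i ω * X j ω ∂μ) * (∫ ω, X k ω * X l ω ∂μ)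
    + (∫ ω, X i ω * X k ω ∂μ) * (∫ ω, X j ω * X l ω ∂μ)
    + (∫ ω, X i ω * X l ω ∂μ) * (∫ ω, X j ω * X k ω ∂μ)

/-- Convergence in probability to a constant, along a sequence of probability spaces. -/
def TendstoInProb {Ω : ℕ → Type} [∀ S, MeasurableSpace (Ω S)]
    (μ : ∀ S, Measure (Ω S)) (X : ∀ S, Ω S → ℝ) (c : ℝ) : Prop :=
  ∀ ε : ℝ, 0 < ε →
    Tendsto (fun S => μ S {ω | ε ≤ |X S ω - c|}) atTop (nhds 0)

/-- `lam` is an antitone enumeration (with multiplicity) of the eigenvalues of `T`. -/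
def EigenvaluesOf {n : ℕ} (T : Matrix (Fin n) (Fin n) ℝ) (lam : Fin n → ℝ) : Prop :=
  Antitone lam ∧ T.charpoly = ∏ i, (Polynomial.X - Polynomial.C (lam i))

/-- The `K × K` matrix whose eigenvalues are the squared sample canonical
correlations between the rows of `U` and of `V`. -/
def ccaMatrix {K M S : ℕ} (U : Matrix (Fin K) (Fin S) ℝ) (V : Matrix (Fin M) (Fin S) ℝ) :
    Matrix (Fin K) (Fin K) ℝ :=
  (U * Uᵀ)⁻¹ * (U * Vᵀ) * (V * Vᵀ)⁻¹ * (V * Uᵀ)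

/-- The companion `M × M` matrix. -/
def ccaMatrixV {K M S : ℕ} (U : Matrix (Fin K) (Fin S) ℝ) (V : Matrix (Fin M) (Fin S) ℝ) :
    Matrix (Fin M) (Fin M) ℝ :=
  (V * Vᵀ)⁻¹ * (V * Uᵀ) * (U * Uᵀ)⁻¹ * (U * Vᵀ)

/-- `λ₊` resp. `λ₋`. -/
def lambdaPlus (τK τM : ℝ) : ℝ :=
  (Real.sqrt (τM⁻¹ * (1 - τK⁻¹)) + Real.sqrt (τK⁻¹ * (1 - τM⁻¹)))^2

def lambdaMinus (τK τM : ℝ) : ℝ :=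
  (Real.sqrt (τM⁻¹ * (1 - τK⁻¹)) - Real.sqrt (τK⁻¹ * (1 - τM⁻¹)))^2

/-- the detection threshold `ρ_c²`. -/
def rhoc2 (τK τM : ℝ) : ℝ := 1 / Real.sqrt ((τM - 1) * (τK - 1))

/-- the outlier location `z_ρ` (as a function of `ρ²`). -/
def zrho (τK τM ρ2 : ℝ) : ℝ :=
  ((τK - 1) * ρ2 + 1) * ((τM - 1) * ρ2 + 1) / (ρ2 * τK * τM)

/-- limit of `sin² θ_x`. -/
def sinx2 (τK τM ρ2 : ℝ) : ℝ :=
  (1 - ρ2) * (τK - 1) / ((τM - 1) * (τK - 1) * ρ2 - 1) *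
    (((τM - 1) * ρ2 + 1) / ((τK - 1) * ρ2 + 1))

/-- limit of `sin² θ_y`. -/
def siny2 (τK τM ρ2 : ℝ) : ℝ :=
  (1 - ρ2) * (τM - 1) / ((τM - 1) * (τK - 1) * ρ2 - 1) *
    (((τK - 1) * ρ2 + 1) / ((τM - 1) * ρ2 + 1))


/-- The density of the Wachter distribution. -/
def wachterDensity (τK τM x : ℝ) : ℝ :=
  τK / (2 * Real.pi) *
    Real.sqrt ((x - lambdaMinus τK τM) * (lambdaPlus τK τM - x)) / (x * (1 - x))

open Real Set

set_option maxHeartbeats 1000000 in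
lemma wachter_key (a b : ℝ) (ha : 0 < a) (hab : a < b) (hb1 : b < 1) :
    ∫ x in a..b, Real.sqrt ((x - a) * (b - x)) / (x * (1 - x))
      = Real.pi * (1 - Real.sqrt (a * b) - Real.sqrt ((1 - a) * (1 - b))) := by
  have hb0 : 0 < b := lt_trans ha hab
  have ha1 : a < 1 := lt_trans hab hb1
  have hba : (0:ℝ) < b - a := by linarith
  have hbane : (b - a) ≠ 0 := ne_of_gt hba
  set A := Real.sqrt (a * b) with hA
  set B := Real.sqrt ((1 - a) * (1 - b)) with hB
  have hA0 : 0 < A := Real.sqrt_pos.mpr (by positivity)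
  have hB0 : 0 < B := Real.sqrt_pos.mpr (by nlinarith)
  have hA2 : A ^ 2 = a * b := Real.sq_sqrt (by positivity)
  have hB2 : B ^ 2 = (1 - a) * (1 - b) := Real.sq_sqrt (by nlinarith)
  set H : ℝ → ℝ := fun x =>
    Real.arcsin ((2 * x - (a + b)) / (b - a))
      - A * Real.arcsin (((a + b) * x - 2 * (a * b)) / ((b - a) * x))
      + B * Real.arcsin (((2 - a - b) * (1 - x) - 2 * ((1 - a) * (1 - b))) / ((b - a) * (1 - x)))
    with hH
  -- derivative on the interior
  have hderiv : ∀ x ∈ Ioo a b, HasDerivAt H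
      (Real.sqrt ((x - a) * (b - x)) / (x * (1 - x))) x := by
    intro x hx
    obtain ⟨hax, hxb⟩ := hx
    have hx0 : 0 < x := lt_trans ha hax
    have hx1 : x < 1 := lt_trans hxb hb1
    have hx1' : (0:ℝ) < 1 - x := by linarith
    set s := Real.sqrt ((x - a) * (b - x)) with hsdef
    have hs0 : 0 < s := Real.sqrt_pos.mpr (by nlinarith)
    have hs2 : s ^ 2 = (x - a) * (b - x) := Real.sq_sqrt (by nlinarith)
    -- term 1
    have hsqrt1 : Real.sqrt (1 - ((2 * x - (a + b)) / (b - a)) ^ 2) = 2 * s / (b - a) := by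
      have h : 1 - ((2 * x - (a + b)) / (b - a)) ^ 2 = (2 * s / (b - a)) ^ 2 := by
        field_simp
        linear_combination (-4:ℝ) * hs2
      rw [h, Real.sqrt_sq (by positivity)]
    have hu_lt : ((2 * x - (a + b)) / (b - a)) < 1 := by
      rw [div_lt_one hba]; linarith
    have hu_gt : (-1:ℝ) < ((2 * x - (a + b)) / (b - a)) := by
      rw [lt_div_iff₀ hba]; linarith
    have h1inner : HasDerivAt (fun y : ℝ => (2 * y - (a + b)) / (b - a)) (2 / (b - a)) x := by
      have : HasDerivAt (fun y : ℝ => 2 * y - (a + b)) 2 x := by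
        simpa using ((hasDerivAt_id x).const_mul (2:ℝ)).sub_const (a + b)
      exact this.div_const _
    have hd1 : HasDerivAt (fun y : ℝ => Real.arcsin ((2 * y - (a + b)) / (b - a))) (1 / s) x := by
      have h := (Real.hasDerivAt_arcsin (ne_of_gt hu_gt) (ne_of_lt hu_lt)).comp x h1inner
      convert h using 1
      rfl
      rfl
      rfl
      rw [hsqrt1]
      field_simp
      try ring
    -- term 2
    have hsqrt2 : Real.sqrt (1 - (((a + b) * x - 2 * (a * b)) / ((b - a) * x)) ^ 2)
        = 2 * A * s / ((b - a) * x) := by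
      have h : 1 - (((a + b) * x - 2 * (a * b)) / ((b - a) * x)) ^ 2
          = (2 * A * s / ((b - a) * x)) ^ 2 := by
        field_simp
        linear_combination (-4 * A^2) * hs2 + (-4 * (x-a) * (b-x)) * hA2
      rw [h, Real.sqrt_sq (by positivity)]
    have hw2 : (((a + b) * x - 2 * (a * b)) / ((b - a) * x)) ^ 2 < 1 := by
      have h : 1 - (((a + b) * x - 2 * (a * b)) / ((b - a) * x)) ^ 2
          = (2 * A * s / ((b - a) * x)) ^ 2 := by
        field_simp
        linear_combination (-4 * A^2) * hs2 + (-4 * (x-a) * (b-x)) * hA2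
      have hEpos : (0:ℝ) < (2 * A * s / ((b - a) * x)) ^ 2 := by positivity
      linarith [h, hEpos]
    obtain ⟨hw_gt, hw_lt⟩ := abs_lt.mp ((sq_lt_one_iff_abs_lt_one _).mp hw2)
    have h2inner : HasDerivAt (fun y : ℝ => ((a + b) * y - 2 * (a * b)) / ((b - a) * y))
        (((a + b) * ((b - a) * x) - ((a + b) * x - 2 * (a * b)) * (b - a)) / ((b - a) * x) ^ 2) x := by
      have hn : HasDerivAt (fun y : ℝ => (a + b) * y - 2 * (a * b)) (a + b) x := by
        simpa using ((hasDerivAt_id x).const_mul (a + b)).sub_const (2 * (a * b))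
      have hd : HasDerivAt (fun y : ℝ => (b - a) * y) (b - a) x := by
        simpa using (hasDerivAt_id x).const_mul (b - a)
      exact hn.div hd (by positivity)
    have hd2 : HasDerivAt (fun y : ℝ => A * Real.arcsin (((a + b) * y - 2 * (a * b)) / ((b - a) * y)))
        (a * b / (x * s)) x := by
      have h := ((Real.hasDerivAt_arcsin (ne_of_gt hw_gt) (ne_of_lt hw_lt)).comp x h2inner).const_mul A
      convert h using 1
      rfl
      rfl
      rfl
      rw [hsqrt2]
      field_simp
      ring
    -- term 3
    have hsqrt3 : Real.sqrt (1 - (((2 - a - b) * (1 - x) - 2 * ((1 - a) * (1 - b))) / ((b - a) * (1 - x))) ^ 2)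
        = 2 * B * s / ((b - a) * (1 - x)) := by
      have h : 1 - (((2 - a - b) * (1 - x) - 2 * ((1 - a) * (1 - b))) / ((b - a) * (1 - x))) ^ 2
          = (2 * B * s / ((b - a) * (1 - x))) ^ 2 := by
        field_simp
        linear_combination (-4 * B^2) * hs2 + (-4 * (x-a) * (b-x)) * hB2
      rw [h, Real.sqrt_sq (by positivity)]
    have hv2 : (((2 - a - b) * (1 - x) - 2 * ((1 - a) * (1 - b))) / ((b - a) * (1 - x))) ^ 2 < 1 := by
      have h : 1 - (((2 - a - b) * (1 - x) - 2 * ((1 - a) * (1 - b))) / ((b - a) * (1 - x))) ^ 2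
          = (2 * B * s / ((b - a) * (1 - x))) ^ 2 := by
        field_simp
        linear_combination (-4 * B^2) * hs2 + (-4 * (x-a) * (b-x)) * hB2
      have hEpos : (0:ℝ) < (2 * B * s / ((b - a) * (1 - x))) ^ 2 := by positivity
      linarith [h, hEpos]
    obtain ⟨hv_gt, hv_lt⟩ := abs_lt.mp ((sq_lt_one_iff_abs_lt_one _).mp hv2)
    have h3inner : HasDerivAt (fun y : ℝ => ((2 - a - b) * (1 - y) - 2 * ((1 - a) * (1 - b))) / ((b - a) * (1 - y)))
        (((-(2 - a - b)) * ((b - a) * (1 - x)) - ((2 - a - b) * (1 - x) - 2 * ((1 - a) * (1 - b))) * (-(b - a))) / ((b - a) * (1 - x)) ^ 2) x := by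
      have hn : HasDerivAt (fun y : ℝ => (2 - a - b) * (1 - y) - 2 * ((1 - a) * (1 - b))) (-(2 - a - b)) x := by
        have h0 : HasDerivAt (fun y : ℝ => 1 - y) (-1 : ℝ) x := by
          simpa using (hasDerivAt_id x).const_sub (1:ℝ)
        simpa [mul_comm] using (h0.const_mul (2 - a - b)).sub_const (2 * ((1 - a) * (1 - b)))
      have hd : HasDerivAt (fun y : ℝ => (b - a) * (1 - y)) (-(b - a)) x := by
        have h0 : HasDerivAt (fun y : ℝ => 1 - y) (-1 : ℝ) x := by
          simpa using (hasDerivAt_id x).const_sub (1:ℝ)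
        simpa using h0.const_mul (b - a)
      exact hn.div hd (by positivity)
    have hd3 : HasDerivAt (fun y : ℝ => B * Real.arcsin (((2 - a - b) * (1 - y) - 2 * ((1 - a) * (1 - b))) / ((b - a) * (1 - y))))
        (-((1 - a) * (1 - b) / ((1 - x) * s))) x := by
      have h := ((Real.hasDerivAt_arcsin (ne_of_gt hv_gt) (ne_of_lt hv_lt)).comp x h3inner).const_mul B
      convert h using 1
      rfl
      rfl
      rfl
      rw [hsqrt3]
      field_simp
      ring
    have hcomb := (hd1.sub hd2).add hd3
    convert hcomb using 1
    rfl
    rfl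
    rfl
    rw [hsdef] at hs2 hs0 ⊢
    set t := Real.sqrt ((x - a) * (b - x))
    field_simp
    linear_combination hs2
  -- continuity of H on [a, b]
  have hcont : ContinuousOn H (Icc a b) := by
    rw [hH]
    apply ContinuousOn.add
    · apply ContinuousOn.sub
      · exact Real.continuous_arcsin.comp_continuousOn
          (((by continuity : Continuous fun x : ℝ => 2 * x - (a + b)).div_const (b - a)).continuousOn)
      · apply ContinuousOn.mul continuousOn_const
        apply Real.continuous_arcsin.comp_continuousOn
        apply ContinuousOn.div (by fun_prop) (by fun_prop)
        intro x hx
        have hx0 : 0 < x := lt_of_lt_of_le ha hx.1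
        positivity
    · apply ContinuousOn.mul continuousOn_const
      apply Real.continuous_arcsin.comp_continuousOn
      apply ContinuousOn.div (by fun_prop) (by fun_prop)
      intro x hx
      have hx1 : x < 1 := lt_of_le_of_lt hx.2 hb1
      have hx1' : (0:ℝ) < 1 - x := by linarith
      positivity
  -- integrability
  have hint : IntervalIntegrable (fun x => Real.sqrt ((x - a) * (b - x)) / (x * (1 - x)))
      MeasureTheory.volume a b := by
    apply ContinuousOn.intervalIntegrable
    apply ContinuousOn.div
    · exact (Real.continuous_sqrt.comp (by continuity)).continuousOn
    · exact (continuous_id.mul (continuous_const.sub continuous_id)).continuousOn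
    · intro x hx
      rw [uIcc_of_le (le_of_lt hab)] at hx
      have h1 : 0 < x := lt_of_lt_of_le ha hx.1
      have h2 : x < 1 := lt_of_le_of_lt hx.2 hb1
      have h3 : (0:ℝ) < 1 - x := by linarith
      positivity
  have key := intervalIntegral.integral_eq_sub_of_hasDerivAt_of_le (le_of_lt hab) hcont hderiv hint
  rw [key]
  -- evaluate H at the endpoints
  have hHb : H b = π / 2 - A * (π / 2) - B * (π / 2) := by
    simp only [hH]
    rw [show (2 * b - (a + b)) / (b - a) = 1 by rw [div_eq_one_iff_eq hbane]; ring,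
        show ((a + b) * b - 2 * (a * b)) / ((b - a) * b) = 1 by field_simp; ring,
        show ((2 - a - b) * (1 - b) - 2 * ((1 - a) * (1 - b))) / ((b - a) * (1 - b)) = -1 by
          rw [div_eq_iff (by nlinarith)]; ring]
    rw [Real.arcsin_one, Real.arcsin_neg_one]
    ring
  have hHa : H a = -(π / 2) + A * (π / 2) + B * (π / 2) := by
    simp only [hH]
    rw [show (2 * a - (a + b)) / (b - a) = -1 by rw [div_eq_iff hbane]; ring,
        show ((a + b) * a - 2 * (a * b)) / ((b - a) * a) = -1 by rw [div_eq_iff (by positivity)]; ring,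
        show ((2 - a - b) * (1 - a) - 2 * ((1 - a) * (1 - b))) / ((b - a) * (1 - a)) = 1 by
          rw [div_eq_iff (by nlinarith)]; ring]
    rw [Real.arcsin_one, Real.arcsin_neg_one]
    ring
  rw [hHb, hHa]
  ring


/-- the Wachter density defines a probability measure on `[λ₋, λ₊]`. -/
theorem wachter_density_integrates_to_one
    (τK τM : ℝ) (hτM : 1 < τM) (hτKM : τM < τK) (hτ : τK⁻¹ + τM⁻¹ < 1) :
    0 < lambdaMinus τK τM ∧ lambdaMinus τK τM < lambdaPlus τK τM ∧
    lambdaPlus τK τM < 1 ∧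
    (∫ x in (lambdaMinus τK τM)..(lambdaPlus τK τM), wachterDensity τK τM x) = 1 := by
  have hτK1 : 1 < τK := lt_trans hτM hτKM
  set u := τK⁻¹ with hu
  set v := τM⁻¹ with hv
  have hu0 : 0 < u := by positivity
  have hv0 : 0 < v := by positivity
  have hv1 : v < 1 := by rw [hv]; exact inv_lt_one_of_one_lt₀ hτM
  have huv : u < v := by
    rw [hu, hv]
    exact inv_strictAnti₀ (by linarith) hτKM
  have huv1 : u + v < 1 := hτ
  set p := Real.sqrt (v * (1 - u)) with hp
  set q := Real.sqrt (u * (1 - v)) with hq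
  have hp2 : p ^ 2 = v * (1 - u) := Real.sq_sqrt (by nlinarith)
  have hq2 : q ^ 2 = u * (1 - v) := Real.sq_sqrt (by nlinarith)
  have hp0 : 0 < p := Real.sqrt_pos.mpr (by nlinarith)
  have hq0 : 0 < q := Real.sqrt_pos.mpr (by nlinarith)
  have hqp : q < p := by
    rw [hp, hq]
    apply Real.sqrt_lt_sqrt (by nlinarith)
    nlinarith
  have hlm : lambdaMinus τK τM = (p - q) ^ 2 := rfl
  have hlp : lambdaPlus τK τM = (p + q) ^ 2 := rfl
  have ha : 0 < lambdaMinus τK τM := by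
    rw [hlm]; have : 0 < p - q := by linarith
    positivity
  have hab : lambdaMinus τK τM < lambdaPlus τK τM := by
    rw [hlm, hlp]; nlinarith
  have hb1 : lambdaPlus τK τM < 1 := by
    rw [hlp]
    have hpq2 : (2 * (p * q)) ^ 2 = 4 * (u * (1 - v)) * (v * (1 - u)) := by
      rw [show (2 * (p*q))^2 = 4 * (p^2 * q^2) from by ring, hp2, hq2]; ring
    have hR : 0 < 1 - u - v + 2 * u * v := by nlinarith
    have h2 : (2 * (p * q)) ^ 2 < (1 - u - v + 2 * u * v) ^ 2 := by
      rw [hpq2]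
      nlinarith [pow_pos (show (0:ℝ) < 1 - u - v by linarith) 2]
    have h3 : 2 * (p * q) < 1 - u - v + 2 * u * v := by
      exact (abs_lt_of_sq_lt_sq' h2 (le_of_lt hR)).2
    nlinarith
  refine ⟨ha, hab, hb1, ?_⟩
  have hI : (∫ x in (lambdaMinus τK τM)..(lambdaPlus τK τM), wachterDensity τK τM x)
      = (τK / (2 * π)) * ∫ x in (lambdaMinus τK τM)..(lambdaPlus τK τM),
          Real.sqrt ((x - lambdaMinus τK τM) * (lambdaPlus τK τM - x)) / (x * (1 - x)) := by
    rw [← intervalIntegral.integral_const_mul]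
    apply intervalIntegral.integral_congr
    intro x _
    rw [wachterDensity, mul_div_assoc]
  rw [hI, wachter_key _ _ ha hab hb1]
  have hAB : lambdaMinus τK τM * lambdaPlus τK τM = (v - u) ^ 2 := by
    rw [hlm, hlp, show (p - q)^2 * (p + q)^2 = (p^2 - q^2)^2 from by ring, hp2, hq2]; ring
  have hAB' : (1 - lambdaMinus τK τM) * (1 - lambdaPlus τK τM) = (1 - u - v) ^ 2 := by
    rw [hlm, hlp, show (1 - (p-q)^2) * (1 - (p+q)^2)
        = 1 - 2 * p^2 - 2 * q^2 + (p^2 - q^2)^2 from by ring, hp2, hq2]; ring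
  rw [hAB, hAB', Real.sqrt_sq (by linarith), Real.sqrt_sq (by linarith)]
  have hπ : (π : ℝ) ≠ 0 := Real.pi_ne_zero
  have hτK0 : τK ≠ 0 := by positivity
  rw [hu]
  field_simp
  ring


end
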